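/- The function Φ(ξ,w) = ∫_ξ^∞ ∫_{−1}^{1} Φ₀(η,w,z) dz dη is continuous on ℝ_{>0} × (−1,1). -/

import Mathlib

open Real Set MeasureTheory

noncomputable def Υ (x : ℝ) : ℝ := if x ≤ 0 then 0 else if x < 1 then x else 1

noncomputable def Φ₀ (ξ w z : ℝ) : ℝ :=
  if w + z ≠ 0 then (6 / π ^ 2) * Υ (1 + (ξ⁻¹ - max |w| |z| - 1) / |w + z|)
  else if ξ⁻¹ < 1 + |w| then 0 else 6 / π ^ 2

noncomputable def Φ (ξ w : ℝ) : ℝ := ∫ η in Ioi ξ, ∫ z in (-1 : ℝ)..1, Φ₀ η w z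

lemma Υ_eq (x : ℝ) : Υ x = min (max x 0) 1 := by
  unfold Υ; simp only [min_def, max_def]; split_ifs <;> linarith

lemma continuous_Υ : Continuous Υ := by
  have : Υ = fun x => min (max x 0) 1 := funext Υ_eq
  rw [this]; continuity

lemma Υ_nonneg (x : ℝ) : 0 ≤ Υ x := by
  rw [Υ_eq]; exact le_min (le_max_right _ _) zero_le_one

lemma Υ_le_one (x : ℝ) : Υ x ≤ 1 := by rw [Υ_eq]; exact min_le_right _ _

lemma Υ_of_nonpos {x : ℝ} (h : x ≤ 0) : Υ x = 0 := by unfold Υ; rw [if_pos h]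

lemma Φ₀_nonneg (η w z : ℝ) : 0 ≤ Φ₀ η w z := by
  unfold Φ₀; split_ifs
  · exact mul_nonneg (by positivity) (Υ_nonneg _)
  · exact le_refl _
  · positivity

lemma Φ₀_le (η w z : ℝ) : Φ₀ η w z ≤ 6 / π ^ 2 := by
  unfold Φ₀; split_ifs
  · nlinarith [Υ_le_one (1 + (η⁻¹ - max |w| |z| - 1) / |w + z|),
      Υ_nonneg (1 + (η⁻¹ - max |w| |z| - 1) / |w + z|),
      div_pos (by norm_num : (0:ℝ) < 6) (by positivity : (0:ℝ) < π ^ 2)]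
  · positivity
  · exact le_refl _

lemma norm_Φ₀_le (η w z : ℝ) : ‖Φ₀ η w z‖ ≤ 6 / π ^ 2 := by
  rw [Real.norm_eq_abs, abs_of_nonneg (Φ₀_nonneg _ _ _)]; exact Φ₀_le _ _ _

lemma Φ₀_eq_zero {η w z : ℝ} (hw : |w| < 1) (hη : (1 - |w|)⁻¹ < η) :
    Φ₀ η w z = 0 := by
  have h1 : (0:ℝ) < 1 - |w| := by linarith
  have h0 : (0:ℝ) < (1 - |w|)⁻¹ := by positivity
  have hηpos : 0 < η := lt_trans h0 hη
  have hinv : η⁻¹ < 1 - |w| := by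
    have := inv_strictAnti₀ h0 hη
    rwa [inv_inv] at this
  unfold Φ₀
  split_ifs with h h2
  · have habs : 0 < |w + z| := abs_pos.mpr h
    have harg : 1 + (η⁻¹ - max |w| |z| - 1) / |w + z| ≤ 0 := by
      have h3 : |w + z| ≤ |w| + |z| := abs_add_le _ _
      have h4 : |z| ≤ max |w| |z| := le_max_right _ _
      have : (η⁻¹ - max |w| |z| - 1) / |w + z| ≤ -1 := by
        rw [div_le_iff₀ habs]; linarith
      linarith
    rw [Υ_of_nonpos harg, mul_zero]
  · rfl
  · exact absurd (by linarith [abs_nonneg w] : η⁻¹ < 1 + |w|) h2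

lemma measurable_Φ₀ (w : ℝ) : Measurable (fun p : ℝ × ℝ => Φ₀ p.1 w p.2) := by
  unfold Φ₀
  apply Measurable.ite
  · exact (measurableSet_eq_fun (by fun_prop) measurable_const).compl
  · exact Measurable.mul measurable_const (continuous_Υ.measurable.comp (by fun_prop))
  · exact Measurable.ite (measurableSet_lt (by fun_prop) measurable_const)
      measurable_const measurable_const

noncomputable def gg (w η : ℝ) : ℝ := ∫ z in Ioc (-1:ℝ) 1, Φ₀ η w z

lemma measurable_gg (w : ℝ) : Measurable (gg w) :=
  ((measurable_Φ₀ w).stronglyMeasurable.integral_prod_right'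
    (ν := volume.restrict (Ioc (-1:ℝ) 1))).measurable

instance : IsFiniteMeasure (volume.restrict (Ioc (-1:ℝ) 1)) :=
  ⟨by rw [Measure.restrict_apply_univ]; exact measure_Ioc_lt_top⟩

lemma gg_bound (w η : ℝ) : ‖gg w η‖ ≤ 12 / π ^ 2 := by
  have h := norm_integral_le_of_norm_le_const
    (μ := volume.restrict (Ioc (-1:ℝ) 1)) (C := 6 / π ^ 2)
    (f := fun z => Φ₀ η w z) (Filter.Eventually.of_forall fun z => norm_Φ₀_le η w z)
  have h2 : ((volume.restrict (Ioc (-1:ℝ) 1)) univ).toReal = 2 := by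
    rw [Measure.restrict_apply_univ, Real.volume_Ioc]
    norm_num
  rw [measureReal_def, h2] at h
  calc ‖gg w η‖ ≤ 6 / π ^ 2 * 2 := h
    _ = 12 / π ^ 2 := by ring

lemma gg_zero {w η : ℝ} (hw : |w| < 1) (hη : (1 - |w|)⁻¹ < η) : gg w η = 0 := by
  have : ∀ z : ℝ, Φ₀ η w z = 0 := fun z => Φ₀_eq_zero hw hη
  simp [gg, this]

lemma continuousAt_gg {η₀ w₀ : ℝ} (hη : η₀ ≠ 0) :
    ContinuousAt (fun p : ℝ × ℝ => gg p.2 p.1) (η₀, w₀) := by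
  have key : ContinuousAt
      (fun p : ℝ × ℝ => ∫ z, Φ₀ p.1 p.2 z ∂(volume.restrict (Ioc (-1:ℝ) 1))) (η₀, w₀) := by
    apply continuousAt_of_dominated (bound := fun _ => 6 / π ^ 2)
    · filter_upwards with p
      exact ((measurable_Φ₀ p.2).comp
        (measurable_const.prodMk measurable_id)).aestronglyMeasurable
    · filter_upwards with p
      filter_upwards with z
      exact norm_Φ₀_le _ _ _
    · exact integrable_const _
    · have h0 : (volume.restrict (Ioc (-1:ℝ) 1)) {-w₀} = 0 := by
        rw [Measure.restrict_apply (measurableSet_singleton _)]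
        exact measure_mono_null inter_subset_left Real.volume_singleton
      have hae : ∀ᵐ z ∂(volume.restrict (Ioc (-1:ℝ) 1)), z ≠ -w₀ := by
        rw [ae_iff]; simpa using h0
      filter_upwards [hae] with z hz
      have hne : w₀ + z ≠ 0 := fun h => hz (by linarith)
      have hcont : ContinuousAt
          (fun p : ℝ × ℝ => (6 / π ^ 2) * Υ (1 + (p.1⁻¹ - max |p.2| |z| - 1) / |p.2 + z|))
          (η₀, w₀) := by
        apply ContinuousAt.mul continuousAt_const
        apply continuous_Υ.continuousAt.comp
        apply ContinuousAt.add continuousAt_const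
        apply ContinuousAt.div
        · exact ((continuousAt_fst.inv₀ hη).sub
            ((continuousAt_snd.abs).max continuousAt_const)).sub continuousAt_const
        · exact (continuousAt_snd.add continuousAt_const).abs
        · simpa [abs_ne_zero] using hne
      apply hcont.congr
      have hopen : IsOpen {p : ℝ × ℝ | p.2 + z ≠ 0} := by
        have : Continuous fun p : ℝ × ℝ => p.2 + z := by fun_prop
        exact isOpen_compl_iff.mpr (isClosed_eq this continuous_const)
      filter_upwards [hopen.mem_nhds hne] with p hp
      simp only [Φ₀, if_pos hp]
  exact key

/-- `Φ(ξ,w)` is continuous on `ℝ_{>0} × (−1,1)`. -/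
theorem stmt11 :
    ContinuousOn (fun p : ℝ × ℝ => Φ p.1 p.2) (Ioi (0 : ℝ) ×ˢ Ioo (-1 : ℝ) 1) := by
  have hrep : (fun p : ℝ × ℝ => Φ p.1 p.2)
      = fun p : ℝ × ℝ => ∫ η, (Ioi p.1).indicator (gg p.2) η := by
    funext p
    have h1 : ∀ η : ℝ, (∫ z in (-1:ℝ)..1, Φ₀ η p.2 z) = gg p.2 η := fun η =>
      intervalIntegral.integral_of_le (by norm_num)
    simp only [Φ, h1]
    exact (integral_indicator measurableSet_Ioi).symm
  rw [hrep]
  intro p₀ hp₀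
  rw [mem_prod] at hp₀
  obtain ⟨hξ₀, hw₀⟩ := hp₀
  rw [mem_Ioi] at hξ₀
  rw [mem_Ioo] at hw₀
  have hwabs : |p₀.2| < 1 := abs_lt.mpr hw₀
  apply ContinuousAt.continuousWithinAt
  set ε := p₀.1 / 2 with hε_def
  have hε : 0 < ε := by positivity
  have hεlt : ε < p₀.1 := by rw [hε_def]; linarith
  set r := (1 + |p₀.2|) / 2 with hr_def
  have hr1 : r < 1 := by rw [hr_def]; linarith
  have hwr : |p₀.2| < r := by rw [hr_def]; linarith [abs_nonneg p₀.2]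
  apply continuousAt_of_dominated
    (bound := (Icc (0:ℝ) ((1 - r)⁻¹)).indicator fun _ => 12 / π ^ 2)
  · filter_upwards with p
    exact ((measurable_gg p.2).indicator measurableSet_Ioi).aestronglyMeasurable
  · have hopen : IsOpen {p : ℝ × ℝ | ε < p.1 ∧ |p.2| < r} := by
      apply IsOpen.inter
      · exact isOpen_lt continuous_const continuous_fst
      · exact isOpen_lt (continuous_snd.abs) continuous_const
    have hmem : p₀ ∈ {p : ℝ × ℝ | ε < p.1 ∧ |p.2| < r} := ⟨hεlt, hwr⟩
    filter_upwards [hopen.mem_nhds hmem] with p hp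
    filter_upwards with η
    have hbnonneg : 0 ≤ (Icc (0:ℝ) ((1 - r)⁻¹)).indicator
        (fun _ => 12 / π ^ 2 : ℝ → ℝ) η :=
      indicator_nonneg (fun _ _ => by positivity) η
    by_cases hmemI : η ∈ Ioi p.1
    · rw [indicator_of_mem hmemI]
      by_cases hle : η ≤ (1 - r)⁻¹
      · have hη0 : (0:ℝ) ≤ η := le_of_lt (lt_trans (lt_trans hε hp.1) hmemI)
        rw [indicator_of_mem (show η ∈ Icc (0:ℝ) ((1 - r)⁻¹) from ⟨hη0, hle⟩)]
        exact gg_bound _ _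
      · have hw' : |p.2| < 1 := lt_trans hp.2 hr1
        have hη' : (1 - |p.2|)⁻¹ < η := by
          have hle' : (1 - |p.2|)⁻¹ ≤ (1 - r)⁻¹ := by
            apply inv_anti₀ (by linarith) (by linarith)
          linarith [not_le.mp hle]
        rw [gg_zero hw' hη', norm_zero]
        exact hbnonneg
    · rw [indicator_of_notMem hmemI, norm_zero]
      exact hbnonneg
  · exact (integrable_indicator_iff measurableSet_Icc).2
      (integrableOn_const measure_Icc_lt_top.ne)
  · have hae : ∀ᵐ η : ℝ, η ≠ p₀.1 := by
      rw [ae_iff]; simpa using (Real.volume_singleton (a := p₀.1))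
    filter_upwards [hae] with η hη
    rcases lt_or_gt_of_ne hη with hlt | hgt
    · apply ContinuousAt.congr (continuousAt_const (y := (0:ℝ)))
      have hopen : IsOpen {p : ℝ × ℝ | η < p.1} := isOpen_lt continuous_const continuous_fst
      filter_upwards [hopen.mem_nhds hlt] with p hp
      rw [indicator_of_notMem (by simpa using le_of_lt hp : η ∉ Ioi p.1)]
    · have hcg : ContinuousAt (fun p : ℝ × ℝ => gg p.2 η) p₀ := by
        have h := continuousAt_gg (η₀ := η) (w₀ := p₀.2) (ne_of_gt (lt_trans hξ₀ hgt))
        have hpair : ContinuousAt (fun p : ℝ × ℝ => ((η, p.2) : ℝ × ℝ)) p₀ :=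
          continuousAt_const.prodMk continuousAt_snd
        have h2 : ContinuousAt ((fun q : ℝ × ℝ => gg q.2 q.1) ∘ (fun p : ℝ × ℝ => (η, p.2))) p₀ :=
          ContinuousAt.comp (x := p₀) h hpair
        exact h2
      apply hcg.congr
      have hopen : IsOpen {p : ℝ × ℝ | p.1 < η} := isOpen_lt continuous_fst continuous_const
      filter_upwards [hopen.mem_nhds hgt] with p hp
      rw [indicator_of_mem (mem_Ioi.mpr hp)]
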